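/- Let p and q be coprime integers with p > q > 1. Then {ρ(w) : w labels a branch of the automaton S_{p/q} from 0} equals the topological closure in ℝ of the span-set Span = {span(n) : n ∈ ℕ}. -/

import Mathlib

/-- `w` labels a branch of the base-p/q automaton with digit set `E` from state `n`:
there are states `s 0 = n, s 1, s 2, …` with `q·s(k+1) = p·s k + w k` and `w k ∈ E`. -/
def IsBranch (p q : ℕ) (E : Set ℤ) (n : ℕ) (w : ℕ → ℤ) : Prop :=
  ∃ s : ℕ → ℕ, s 0 = n ∧ ∀ k : ℕ, (q : ℤ) * s (k + 1) = p * s k + w k ∧ w k ∈ E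

/-- `u` (a word of length `ℓ`) labels a path from `n` to `m` in the base-p/q automaton
with digit set `E`. -/
def IsPath (p q : ℕ) (E : Set ℤ) (n m ℓ : ℕ) (u : ℕ → ℤ) : Prop :=
  ∃ s : ℕ → ℕ, s 0 = n ∧ s ℓ = m ∧
    ∀ k < ℓ, (q : ℤ) * s (k + 1) = p * s k + u k ∧ u k ∈ E

/-- The canonical digit alphabet `A_p = {0, 1, …, p−1}`. -/
def Ap (p : ℕ) : Set ℤ := Set.Icc 0 ((p : ℤ) - 1)

/-- The lower alphabet `{0, 1, …, q−1}`. -/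
def LowAlph (q : ℕ) : Set ℤ := Set.Icc 0 ((q : ℤ) - 1)

/-- The upper alphabet `{p−q, …, p−1}`. -/
def UpAlph (p q : ℕ) : Set ℤ := Set.Icc ((p : ℤ) - q) ((p : ℤ) - 1)

/-- The alphabet `D = {p−2q+1, …, p−1}` of the automaton `S_{p/q}`. -/
def Dalph (p q : ℕ) : Set ℤ := Set.Icc ((p : ℤ) - 2 * q + 1) ((p : ℤ) - 1)

/-- Evaluation after the radix point: `ρ(w) = Σ_{i≥1} (w_i/q)·(q/p)^i`
(here `w k` is the `(k+1)`-st digit). -/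
noncomputable def rho (p q : ℕ) (w : ℕ → ℤ) : ℝ :=
  ∑' i : ℕ, ((w i : ℝ) / q) * ((q : ℝ) / p) ^ (i + 1)

section aux
variable {p q : ℕ}

lemma r0 (hq : 0 < q) (hpq : q < p) : (0:ℝ) ≤ (q:ℝ)/p := by positivity

lemma r1 (hq : 0 < q) (hpq : q < p) : (q:ℝ)/p < 1 := by
  have hp : (0:ℝ) < p := by exact_mod_cast hq.trans hpq
  rw [div_lt_one hp]
  exact_mod_cast hpq

lemma summable_bd (hq : 0 < q) (hpq : q < p) (w : ℕ → ℤ) (C : ℝ)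
    (hC : ∀ i, |(w i : ℝ)| ≤ C) :
    Summable (fun i : ℕ => ((w i : ℝ) / q) * ((q : ℝ) / p) ^ (i + 1)) := by
  have hr0 := r0 hq hpq; have hr1 := r1 hq hpq
  have hgeo : Summable (fun i : ℕ => (C / q * ((q:ℝ)/p)) * ((q:ℝ)/p) ^ i) :=
    (summable_geometric_of_lt_one hr0 hr1).mul_left _
  have hgeo' : Summable (fun i : ℕ => (C / q) * ((q:ℝ)/p) ^ (i+1)) := by
    simpa [pow_succ, mul_comm, mul_assoc, mul_left_comm] using hgeo
  refine hgeo'.of_norm_bounded ?_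
  intro i
  have h1 : (0:ℝ) < q := by exact_mod_cast hq
  rw [norm_mul, norm_div, Real.norm_natCast, norm_pow, norm_div, Real.norm_natCast,
    Real.norm_natCast]
  rw [Real.norm_eq_abs]
  gcongr
  exact hC i


lemma pin (hq : 0 < q) {lo d e : ℤ} (hd : lo ≤ d) (hd' : d ≤ lo + q - 1)
    (he : lo ≤ e) (he' : e ≤ lo + q - 1) (hdvd : (q:ℤ) ∣ d - e) : d = e := by
  have h := Int.eq_zero_of_abs_lt_dvd hdvd (by rw [abs_lt]; omega)
  omega

lemma span_mem (hq : 1 < q) (hpq : q < p) (mwn mxn : ℕ → ℤ) (n : ℕ)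
    (hmw : IsBranch p q (LowAlph q) n mwn)
    (hmx : IsBranch p q (UpAlph p q) n mxn) :
    ∃ w : ℕ → ℤ, IsBranch p q (Dalph p q) 0 w ∧
      rho p q mxn - rho p q mwn = rho p q w := by
  obtain ⟨s, hs0, hs⟩ := hmw
  obtain ⟨s', hs0', hs'⟩ := hmx
  have hq0 : 0 < q := lt_trans one_pos hq
  have hle : ∀ k, s k ≤ s' k := by
    intro k
    induction k with
    | zero => rw [hs0, hs0']
    | succ k ih =>
      have h1 := (hs k).1
      have h2 := (hs' k).1
      obtain ⟨hl1, hl2⟩ := (hs k).2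
      obtain ⟨hu1, hu2⟩ := (hs' k).2
      have hd : ((s k : ℤ)) ≤ (s' k : ℤ) := by exact_mod_cast ih
      have hq' : (1:ℤ) < q := by exact_mod_cast hq
      have hp' : (q:ℤ) < p := by exact_mod_cast hpq
      have hstep : (q:ℤ) * (-1) < q * (s' (k+1) : ℤ) - q * (s (k+1) : ℤ) := by
        have hps : (p:ℤ) * (s k : ℤ) ≤ (p:ℤ) * (s' k : ℤ) := by
          have : (0:ℤ) ≤ p := by positivity
          exact mul_le_mul_of_nonneg_left hd this
        linarith
      have : (-1 : ℤ) < (s' (k+1) : ℤ) - (s (k+1) : ℤ) := by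
        rw [← mul_lt_mul_iff_right₀ (show (0:ℤ) < q by exact_mod_cast hq0)]
        linarith [hstep]
      have : (s (k+1) : ℤ) ≤ (s' (k+1) : ℤ) := by omega
      exact_mod_cast this
  refine ⟨fun k => mxn k - mwn k, ⟨fun k => s' k - s k, by show s' 0 - s 0 = 0; rw [hs0, hs0']; omega, ?_⟩, ?_⟩
  · intro k
    have h1 := (hs k).1
    have h2 := (hs' k).1
    obtain ⟨hl1, hl2⟩ := (hs k).2
    obtain ⟨hu1, hu2⟩ := (hs' k).2
    constructor
    · push_cast [Nat.cast_sub (hle (k+1)), Nat.cast_sub (hle k)]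
      linarith
    · simp only [Dalph, Set.mem_Icc]
      omega
  · have Smx := summable_bd hq0 hpq mxn p (by
      intro i; obtain ⟨h1, h2⟩ := (hs' i).2
      have : |mxn i| ≤ (p:ℤ) := by rw [abs_le]; omega
      exact_mod_cast this)
    have Smw := summable_bd hq0 hpq mwn p (by
      intro i; obtain ⟨h1, h2⟩ := (hs i).2
      have : |mwn i| ≤ (p:ℤ) := by rw [abs_le]; omega
      exact_mod_cast this)
    rw [rho, rho, rho, ← Summable.tsum_sub Smx Smw]
    apply tsum_congr
    intro i
    push_cast
    ring

lemma approx (hco : Nat.Coprime p q) (hq : 1 < q) (hpq : q < p)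
    (mw mx : ℕ → ℕ → ℤ)
    (hmw : ∀ n, IsBranch p q (LowAlph q) n (mw n))
    (hmx : ∀ n, IsBranch p q (UpAlph p q) n (mx n))
    (w : ℕ → ℤ) (hw : IsBranch p q (Dalph p q) 0 w) (N : ℕ) :
    ∃ n : ℕ, ∀ i < N, mx n i - mw n i = w i := by
  have hq0 : 0 < q := lt_trans one_pos hq
  have hqZ : (0:ℤ) < q := by exact_mod_cast hq0
  obtain ⟨t, ht0, ht⟩ := hw
  -- digit choice
  set a : ℕ → ℤ := fun i => max 0 ((p:ℤ) - q - w i) with ha_def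
  have hwD : ∀ i, (p:ℤ) - 2*q + 1 ≤ w i ∧ w i ≤ (p:ℤ) - 1 := fun i => (ht i).2
  have ha : ∀ i, 0 ≤ a i ∧ a i ≤ (q:ℤ) - 1 := by
    intro i
    obtain ⟨h1, h2⟩ := hwD i
    rcases max_cases 0 ((p:ℤ) - q - w i) with ⟨he, hl⟩ | ⟨he, hl⟩ <;>
      rw [ha_def] <;> simp only [] <;> rw [he] <;> omega
  have hb : ∀ i, (p:ℤ) - q ≤ a i + w i ∧ a i + w i ≤ (p:ℤ) - 1 := by
    intro i
    obtain ⟨h1, h2⟩ := hwD i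
    rcases max_cases 0 ((p:ℤ) - q - w i) with ⟨he, hl⟩ | ⟨he, hl⟩ <;>
      rw [ha_def] <;> simp only [] <;> rw [he] <;> omega
  -- partial sums
  set S : ℕ → ℤ := fun k => ∑ i ∈ Finset.range k, a i * (p:ℤ)^(k-1-i) * (q:ℤ)^i with hS_def
  have hS0 : S 0 = 0 := by simp [hS_def]
  have hSrec : ∀ k, S (k+1) = p * S k + a k * (q:ℤ)^k := by
    intro k
    rw [hS_def]
    simp only []
    rw [Finset.sum_range_succ, Finset.mul_sum]
    congr 1
    · apply Finset.sum_congr rfl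
      intro i hi
      have hik : i < k := Finset.mem_range.mp hi
      have : k + 1 - 1 - i = (k - 1 - i) + 1 := by omega
      rw [this, pow_succ]
      ring
    · have : k + 1 - 1 - k = 0 := by omega
      rw [this, pow_zero]
      ring
  -- choose n
  have hbase : IsCoprime ((q:ℤ)) ((p:ℤ)) := Nat.isCoprime_iff_coprime.mpr hco.symm
  obtain ⟨x, y, hxy⟩ := (hbase.symm.pow (m := N) (n := N))
  set m : ℤ := -(S N) * x with hm_def
  have hm : ((q:ℤ)^N) ∣ (p:ℤ)^N * m + S N := by
    refine ⟨S N * y, ?_⟩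
    have : (p:ℤ)^N * m + S N = S N * (1 - x * (p:ℤ)^N) := by rw [hm_def]; ring
    rw [this]
    have : (1 : ℤ) - x * (p:ℤ)^N = y * (q:ℤ)^N := by linarith [hxy]
    rw [this]; ring
  set n0 : ℤ := m % ((q:ℤ)^N) with hn0_def
  have hn0 : 0 ≤ n0 := Int.emod_nonneg _ (by positivity)
  have hdvdN : ((q:ℤ)^N) ∣ (p:ℤ)^N * n0 + S N := by
    have h2 : ((q:ℤ)^N) ∣ (n0 - m) := by
      refine ⟨-(m / (q:ℤ)^N), ?_⟩
      rw [hn0_def, Int.emod_def]; ring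
    have : (p:ℤ)^N * n0 + S N = ((p:ℤ)^N * m + S N) + (p:ℤ)^N * (n0 - m) := by ring
    rw [this]
    exact dvd_add hm (Dvd.dvd.mul_left h2 _)
  have hdvdk : ∀ k, k ≤ N → ((q:ℤ)^k) ∣ (p:ℤ)^k * n0 + S k := by
    intro k hk
    have hsplit : S N = S k * (p:ℤ)^(N-k) + ∑ i ∈ Finset.Ico k N, a i * (p:ℤ)^(N-1-i) * (q:ℤ)^i := by
      rw [hS_def]
      simp only []
      rw [Finset.range_eq_Ico, ← Finset.sum_Ico_consecutive _ (Nat.zero_le k) hk,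
        ← Finset.range_eq_Ico, Finset.sum_mul]
      congr 1
      apply Finset.sum_congr rfl
      intro i hi
      have hik : i < k := Finset.mem_range.mp hi
      have : N - 1 - i = (k - 1 - i) + (N - k) := by omega
      rw [this, pow_add]
      ring
    have h3 : ((q:ℤ)^k) ∣ ∑ i ∈ Finset.Ico k N, a i * (p:ℤ)^(N-1-i) * (q:ℤ)^i := by
      apply Finset.dvd_sum
      intro i hi
      exact Dvd.dvd.mul_left (pow_dvd_pow _ (Finset.mem_Ico.mp hi).1) _
    have h4 : ((q:ℤ)^k) ∣ (p:ℤ)^(N-k) * ((p:ℤ)^k * n0 + S k) := by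
      have key : (p:ℤ)^(N-k) * ((p:ℤ)^k * n0 + S k)
          = ((p:ℤ)^N * n0 + S N) - ∑ i ∈ Finset.Ico k N, a i * (p:ℤ)^(N-1-i) * (q:ℤ)^i := by
        rw [hsplit]
        have : (p:ℤ)^(N-k) * (p:ℤ)^k = (p:ℤ)^N := by
          rw [← pow_add]; congr 1; omega
        nlinarith [this]
      rw [key]
      exact dvd_sub (dvd_trans (pow_dvd_pow _ hk) hdvdN) h3
    exact (hbase.pow (m := k) (n := N - k)).dvd_of_dvd_mul_left h4
  set n : ℕ := n0.toNat with hn_def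
  have hnZ : (n:ℤ) = n0 := Int.toNat_of_nonneg hn0
  -- low branch
  obtain ⟨s, hs0, hs⟩ := hmw n
  have hlowstate : ∀ k, k ≤ N → (q:ℤ)^k * (s k : ℤ) = (p:ℤ)^k * n0 + S k := by
    intro k
    induction k with
    | zero => intro _; simp [hs0, hS0, hnZ]
    | succ k ih =>
      intro hk
      have h1 := ih (Nat.le_of_succ_le hk)
      have hrec := (hs k).1
      obtain ⟨hl1, hl2⟩ := (hs k).2
      have e1 : (q:ℤ)^(k+1) * (s (k+1) : ℤ)
          = (p:ℤ)^(k+1) * n0 + S (k+1) + (q:ℤ)^k * (mw n k - a k) := by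
        have hS := hSrec k
        linear_combination (q:ℤ)^k * hrec + (p:ℤ) * h1 - hS
      have hdig : mw n k = a k := by
        have h5 : (q:ℤ)^(k+1) ∣ (q:ℤ)^k * (mw n k - a k) := by
          have heq : (q:ℤ)^k * (mw n k - a k)
              = (q:ℤ)^(k+1) * (s (k+1) : ℤ) - ((p:ℤ)^(k+1) * n0 + S (k+1)) := by
            linarith [e1]
          rw [heq]
          exact dvd_sub (Dvd.intro _ rfl) (hdvdk (k+1) hk)
        have h6 : (q:ℤ) ∣ (mw n k - a k) := by
          rw [pow_succ] at h5
          rcases h5 with ⟨c, hc⟩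
          have hne : ((q:ℤ)^k) ≠ 0 := by positivity
          exact ⟨c, mul_left_cancel₀ hne (by linear_combination hc)⟩
        obtain ⟨ha1, ha2⟩ := ha k
        exact pin hq0 (lo := 0) (by omega) (by omega) (by omega) (by omega) h6
      have hz : mw n k - a k = 0 := by rw [hdig]; ring
      rw [hz, mul_zero, add_zero] at e1
      exact e1
  have hlowdig : ∀ k, k < N → mw n k = a k := by
    intro k hk
    have h1 := hlowstate k (Nat.le_of_lt hk)
    have h2 := hlowstate (k+1) hk
    have hrec := (hs k).1
    have e1 : (q:ℤ)^k * (mw n k - a k) = 0 := by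
      linear_combination (-(q:ℤ)^k) * hrec - (p:ℤ) * h1 + h2 + hSrec k
    have hne : ((q:ℤ)^k) ≠ 0 := by positivity
    have := mul_eq_zero.mp e1
    rcases this with h | h
    · exact absurd h hne
    · omega
  -- up branch
  obtain ⟨s', hs0', hs'⟩ := hmx n
  have hupstate : ∀ k, k ≤ N → (q:ℤ)^k * (s' k : ℤ) = (p:ℤ)^k * n0 + S k + (q:ℤ)^k * (t k : ℤ) := by
    intro k
    induction k with
    | zero => intro _; simp [hs0', hS0, hnZ, ht0]
    | succ k ih =>
      intro hk
      have h1 := ih (Nat.le_of_succ_le hk)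
      have hrec := (hs' k).1
      have htk := (ht k).1
      obtain ⟨hu1, hu2⟩ := (hs' k).2
      have e1 : (q:ℤ)^(k+1) * (s' (k+1) : ℤ)
          = (p:ℤ)^(k+1) * n0 + S (k+1) + (q:ℤ)^(k+1) * (t (k+1) : ℤ)
            + (q:ℤ)^k * (mx n k - a k - w k) := by
        linear_combination (q:ℤ)^k * hrec + (p:ℤ) * h1 - (q:ℤ)^k * htk - hSrec k
      have hdig : mx n k = a k + w k := by
        have h5 : (q:ℤ)^(k+1) ∣ (q:ℤ)^k * (mx n k - a k - w k) := by
          have heq : (q:ℤ)^k * (mx n k - a k - w k)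
              = (q:ℤ)^(k+1) * (s' (k+1) : ℤ) - ((p:ℤ)^(k+1) * n0 + S (k+1))
                - (q:ℤ)^(k+1) * (t (k+1) : ℤ) := by
            linarith [e1]
          rw [heq]
          exact dvd_sub (dvd_sub (Dvd.intro _ rfl) (hdvdk (k+1) hk)) (Dvd.intro _ rfl)
        have h6 : (q:ℤ) ∣ (mx n k - (a k + w k)) := by
          rw [pow_succ] at h5
          rcases h5 with ⟨c, hc⟩
          have hne : ((q:ℤ)^k) ≠ 0 := by positivity
          exact ⟨c, mul_left_cancel₀ hne (by linear_combination hc)⟩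
        obtain ⟨hb1, hb2⟩ := hb k
        exact pin hq0 (lo := (p:ℤ) - q) (by omega) (by omega) (by omega) (by omega) h6
      have hz : mx n k - a k - w k = 0 := by rw [hdig]; ring
      rw [hz, mul_zero, add_zero] at e1
      exact e1
  have hupdig : ∀ k, k < N → mx n k = a k + w k := by
    intro k hk
    have h1 := hupstate k (Nat.le_of_lt hk)
    have h2 := hupstate (k+1) hk
    have hrec := (hs' k).1
    have htk := (ht k).1
    have e1 : (q:ℤ)^k * (mx n k - a k - w k) = 0 := by
      linear_combination (-(q:ℤ)^k) * hrec - (p:ℤ) * h1 + (q:ℤ)^k * htk + h2 + hSrec k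
    have hne : ((q:ℤ)^k) ≠ 0 := by positivity
    rcases mul_eq_zero.mp e1 with h | h
    · exact absurd h hne
    · omega
  exact ⟨n, fun i hi => by rw [hupdig i hi, hlowdig i hi]; ring⟩


lemma path_det (hq0 : 0 < q) {E : Set ℤ} (w : ℕ → ℤ) {L L' n : ℕ} (s s' : ℕ → ℕ)
    (hs0 : s 0 = n) (hs0' : s' 0 = n)
    (hs : ∀ k < L, (q:ℤ) * s (k+1) = p * s k + w k ∧ w k ∈ E)
    (hs' : ∀ k < L', (q:ℤ) * s' (k+1) = p * s' k + w k ∧ w k ∈ E) :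
    ∀ k, k ≤ L → k ≤ L' → s k = s' k := by
  intro k
  induction k with
  | zero => intro _ _; rw [hs0, hs0']
  | succ k ih =>
    intro h1 h2
    have he := ih (Nat.le_of_succ_le h1) (Nat.le_of_succ_le h2)
    have e1 := (hs k h1).1
    have e2 := (hs' k h2).1
    rw [he] at e1
    have : (q:ℤ) * (s (k+1) : ℤ) = (q:ℤ) * (s' (k+1) : ℤ) := by rw [e1, e2]
    have hqne : ((q:ℤ)) ≠ 0 := by positivity
    have := mul_left_cancel₀ hqne this
    exact_mod_cast this

lemma branch_iff_paths (hq0 : 0 < q) (E : Set ℤ) (w : ℕ → ℤ) :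
    IsBranch p q E 0 w ↔ ∀ N, ∃ m, IsPath p q E 0 m N w := by
  constructor
  · rintro ⟨s, hs0, hs⟩ N
    exact ⟨s N, s, hs0, rfl, fun k _ => hs k⟩
  · intro h
    choose m hm using h
    choose u hu1 hu2 hu3 using hm
    refine ⟨fun k => u (k+1) k, hu1 1, fun k => ?_⟩
    have hdet : u (k+2) k = u (k+1) k :=
      path_det hq0 w (u (k+2)) (u (k+1)) (hu1 _) (hu1 _) (hu3 _) (hu3 _) k
        (by omega) (by omega)
    have := hu3 (k+2) k (by omega)
    rw [hdet] at this
    exact this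

lemma closed_B (hq0 : 0 < q) :
    IsClosed {w : ℕ → ℤ | IsBranch p q (Dalph p q) 0 w} := by
  have hchar : {w : ℕ → ℤ | IsBranch p q (Dalph p q) 0 w}
      = ⋂ N : ℕ, {w : ℕ → ℤ | ∃ m, IsPath p q (Dalph p q) 0 m N w} := by
    ext w
    simp only [Set.mem_setOf_eq, Set.mem_iInter]
    exact branch_iff_paths hq0 _ w
  rw [hchar]
  refine isClosed_iInter (fun N => ?_)
  have hp : {w : ℕ → ℤ | ∃ m, IsPath p q (Dalph p q) 0 m N w}
      = (fun w : ℕ → ℤ => fun i : Fin N => w i) ⁻¹'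
        ((fun w : ℕ → ℤ => fun i : Fin N => w i) ''
          {w : ℕ → ℤ | ∃ m, IsPath p q (Dalph p q) 0 m N w}) := by
    apply subset_antisymm (Set.subset_preimage_image _ _)
    intro w hw
    obtain ⟨w', hw', hproj⟩ := hw
    obtain ⟨m, s, h0, hN, hrel⟩ := hw'
    refine ⟨m, s, h0, hN, fun k hk => ?_⟩
    have : w' k = w k := congrFun hproj ⟨k, hk⟩
    rw [← this]
    exact hrel k hk
  rw [hp]
  exact (isClosed_discrete _).preimage (continuous_pi fun i => continuous_apply _)

lemma compact_B (hq0 : 0 < q) :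
    IsCompact {w : ℕ → ℤ | IsBranch p q (Dalph p q) 0 w} := by
  refine IsCompact.of_isClosed_subset
    (isCompact_univ_pi (s := fun _ : ℕ => Dalph p q)
      (fun _ => (Set.finite_Icc ((p:ℤ) - 2*q + 1) ((p:ℤ) - 1)).isCompact))
    (closed_B hq0) ?_
  rintro w ⟨s, hs0, hs⟩ i _
  exact (hs i).2

lemma rho_contOn (hq : 1 < q) (hpq : q < p) :
    ContinuousOn (rho p q) (Set.univ.pi fun _ : ℕ => Dalph p q) := by
  have hq0 : 0 < q := lt_trans one_pos hq
  have hr0 := r0 (p := p) hq0 hpq; have hr1 := r1 (p := p) hq0 hpq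
  rw [continuousOn_iff_continuous_restrict]
  have hrw : (Set.univ.pi fun _ : ℕ => Dalph p q).domRestrict (rho p q)
      = fun w : (Set.univ.pi fun _ : ℕ => Dalph p q) =>
          ∑' i : ℕ, (((w.1 i : ℝ)) / q) * ((q:ℝ)/p) ^ (i+1) := rfl
  rw [hrw]
  apply continuous_tsum (u := fun i : ℕ => ((2*p/q) * ((q:ℝ)/p)) * ((q:ℝ)/p) ^ i)
  · intro i
    exact (((continuous_of_discreteTopology (α := ℤ) (f := fun z : ℤ => (z : ℝ))).comp
      ((continuous_apply i).comp continuous_subtype_val)).div_const _).mul continuous_const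
  · exact (summable_geometric_of_lt_one hr0 hr1).mul_left _
  · intro i w
    have hmem := w.2 i (Set.mem_univ i)
    have hbd : |w.1 i| ≤ 2 * (p:ℤ) := by
      obtain ⟨h1, h2⟩ := hmem
      rw [abs_le]; omega
    have hbdR : |(w.1 i : ℝ)| ≤ 2 * p := by exact_mod_cast hbd
    rw [norm_mul, norm_div, Real.norm_natCast, norm_pow, norm_div, Real.norm_natCast,
      Real.norm_natCast, Real.norm_eq_abs]
    have : ((2*(p:ℝ)/q) * ((q:ℝ)/p)) * ((q:ℝ)/p) ^ i = (2*p/q) * ((q:ℝ)/p)^(i+1) := by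
      rw [pow_succ]; ring
    rw [this]
    gcongr

end aux

theorem stmt4 (p q : ℕ) (hco : Nat.Coprime p q) (hq : 1 < q) (hpq : q < p)
    (mw mx : ℕ → ℕ → ℤ)
    (hmw : ∀ n, IsBranch p q (LowAlph q) n (mw n))
    (hmx : ∀ n, IsBranch p q (UpAlph p q) n (mx n)) :
    {x : ℝ | ∃ w : ℕ → ℤ, IsBranch p q (Dalph p q) 0 w ∧ x = rho p q w}
      = closure {x : ℝ | ∃ n : ℕ, x = rho p q (mx n) - rho p q (mw n)} := by
  have hq0 : 0 < q := lt_trans one_pos hq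
  have hr0 := r0 (p := p) hq0 hpq
  have hr1 := r1 (p := p) hq0 hpq
  set r : ℝ := (q:ℝ)/p with hr_def
  apply Set.Subset.antisymm
  · -- forward: every branch value is a limit of spans
    rintro x ⟨w, hw, rfl⟩
    rw [Metric.mem_closure_iff]
    intro ε hε
    have hC : Filter.Tendsto
        (fun N : ℕ => ((4*(p:ℝ)/q) * r * (1-r)⁻¹) * r^N) Filter.atTop (nhds 0) := by
      have h := (tendsto_pow_atTop_nhds_zero_of_lt_one hr0 hr1).const_mul
        ((4*(p:ℝ)/q) * r * (1-r)⁻¹)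
      simpa using h
    obtain ⟨N, hN⟩ := (hC.eventually_lt_const hε).exists
    obtain ⟨n, hn⟩ := approx hco hq hpq mw mx hmw hmx w hw N
    refine ⟨rho p q (mx n) - rho p q (mw n), ⟨n, rfl⟩, ?_⟩
    obtain ⟨sw, hsw0, hsw⟩ := hw
    obtain ⟨s1, h10, h1s⟩ := hmw n
    obtain ⟨s2, h20, h2s⟩ := hmx n
    have Sw : Summable (fun i : ℕ => ((w i : ℝ)/q) * r^(i+1)) := by
      refine summable_bd hq0 hpq w (2*p) (fun i => ?_)
      obtain ⟨a1, a2⟩ := (hsw i).2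
      have : |w i| ≤ 2*(p:ℤ) := by rw [abs_le]; omega
      exact_mod_cast this
    have Smw : Summable (fun i : ℕ => ((mw n i : ℝ)/q) * r^(i+1)) := by
      refine summable_bd hq0 hpq (mw n) (2*p) (fun i => ?_)
      obtain ⟨a1, a2⟩ := (h1s i).2
      have : |mw n i| ≤ 2*(p:ℤ) := by rw [abs_le]; omega
      exact_mod_cast this
    have Smx : Summable (fun i : ℕ => ((mx n i : ℝ)/q) * r^(i+1)) := by
      refine summable_bd hq0 hpq (mx n) (2*p) (fun i => ?_)
      obtain ⟨a1, a2⟩ := (h2s i).2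
      have : |mx n i| ≤ 2*(p:ℤ) := by rw [abs_le]; omega
      exact_mod_cast this
    set g : ℕ → ℝ := fun i => (((mx n i - mw n i - w i : ℤ) : ℝ)/q) * r^(i+1) with hg_def
    have Sg : Summable g := by
      refine summable_bd hq0 hpq (fun i => mx n i - mw n i - w i) (4*p) (fun i => ?_)
      obtain ⟨a1, a2⟩ := (hsw i).2
      obtain ⟨b1, b2⟩ := (h1s i).2
      obtain ⟨c1, c2⟩ := (h2s i).2
      have : |mx n i - mw n i - w i| ≤ 4*(p:ℤ) := by rw [abs_le]; omega
      exact_mod_cast this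
    have e2 : rho p q (mx n) - rho p q (mw n) - rho p q w = ∑' i, g i := by
      rw [rho, rho, rho, ← Summable.tsum_sub Smx Smw, ← Summable.tsum_sub (Smx.sub Smw) Sw]
      exact tsum_congr (fun i => by rw [hg_def]; push_cast; ring)
    have hgz : ∀ i < N, g i = 0 := by
      intro i hi
      rw [hg_def]
      simp only []
      rw [hn i hi]
      simp
    have e3 : ∑' i, g i = ∑' i, g (i + N) := by
      have := Summable.sum_add_tsum_nat_add N Sg
      rw [Finset.sum_eq_zero (fun i hi => hgz i (Finset.mem_range.mp hi))] at this
      linarith [this]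
    have hb1 : ∀ i : ℕ, ‖g (i+N)‖ ≤ ((4*(p:ℝ)/q) * r^(N+1)) * r^i := by
      intro i
      obtain ⟨a1, a2⟩ := (hsw (i+N)).2
      obtain ⟨b1, b2⟩ := (h1s (i+N)).2
      obtain ⟨c1, c2⟩ := (h2s (i+N)).2
      have hbd : |mx n (i+N) - mw n (i+N) - w (i+N)| ≤ 4*(p:ℤ) := by rw [abs_le]; omega
      have hbdR : |((mx n (i+N) - mw n (i+N) - w (i+N) : ℤ) : ℝ)| ≤ 4*(p:ℝ) := by
        exact_mod_cast hbd
      rw [hg_def]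
      simp only []
      rw [norm_mul, norm_div, Real.norm_natCast, norm_pow, Real.norm_eq_abs,
        Real.norm_eq_abs, abs_of_nonneg hr0]
      have hre : r ^ (i + N + 1) = r^(N+1) * r^i := by
        rw [show i + N + 1 = (N+1) + i by omega, pow_add]
      rw [hre, show ((4*(p:ℝ)/q) * r^(N+1)) * r^i = (4*(p:ℝ)/q) * (r^(N+1) * r^i) by ring]
      gcongr
    have hSb : Summable (fun i : ℕ => ((4*(p:ℝ)/q) * r^(N+1)) * r^i) :=
      (summable_geometric_of_lt_one hr0 hr1).mul_left _
    have hSgn : Summable (fun i : ℕ => ‖g (i+N)‖) :=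
      Summable.of_nonneg_of_le (fun i => norm_nonneg _) hb1 hSb
    have hb2 : ‖∑' i, g (i+N)‖ ≤ ((4*(p:ℝ)/q) * r^(N+1)) * (1-r)⁻¹ := by
      calc ‖∑' i, g (i+N)‖ ≤ ∑' i, ‖g (i+N)‖ := norm_tsum_le_tsum_norm hSgn
        _ ≤ ∑' i, ((4*(p:ℝ)/q) * r^(N+1)) * r^i := Summable.tsum_le_tsum hb1 hSgn hSb
        _ = ((4*(p:ℝ)/q) * r^(N+1)) * (1-r)⁻¹ := by
            rw [tsum_mul_left, tsum_geometric_of_lt_one hr0 hr1]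
    calc dist (rho p q w) (rho p q (mx n) - rho p q (mw n))
        = ‖∑' i, g (i+N)‖ := by
          rw [Real.dist_eq, ← e3, ← e2, Real.norm_eq_abs, abs_sub_comm]
        _ ≤ ((4*(p:ℝ)/q) * r^(N+1)) * (1-r)⁻¹ := hb2
        _ = ((4*(p:ℝ)/q) * r * (1-r)⁻¹) * r^N := by rw [pow_succ]; ring
        _ < ε := hN
  · -- reverse: closure of spans ⊆ branch values
    have hsubLHS : {x : ℝ | ∃ n : ℕ, x = rho p q (mx n) - rho p q (mw n)}
        ⊆ {x : ℝ | ∃ w : ℕ → ℤ, IsBranch p q (Dalph p q) 0 w ∧ x = rho p q w} := by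
      rintro x ⟨n, rfl⟩
      obtain ⟨w, hbr, heq⟩ := span_mem hq hpq (mw n) (mx n) n (hmw n) (hmx n)
      exact ⟨w, hbr, heq⟩
    have himg : {x : ℝ | ∃ w : ℕ → ℤ, IsBranch p q (Dalph p q) 0 w ∧ x = rho p q w}
        = rho p q '' {w : ℕ → ℤ | IsBranch p q (Dalph p q) 0 w} := by
      ext x
      constructor
      · rintro ⟨w, h1, h2⟩; exact ⟨w, h1, h2.symm⟩
      · rintro ⟨w, h1, h2⟩; exact ⟨w, h1, h2.symm⟩
    have hclosed : IsClosed {x : ℝ | ∃ w : ℕ → ℤ, IsBranch p q (Dalph p q) 0 w ∧ x = rho p q w} := by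
      rw [himg]
      refine ((compact_B hq0).image_of_continuousOn
        ((rho_contOn hq hpq).mono ?_)).isClosed
      rintro w ⟨s, hs0, hs⟩ i _
      exact (hs i).2
    exact closure_minimal hsubLHS hclosed
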